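/- (Coercivity of the strain gradient elastic energy.) Let λ ≥ 0, μ > 0 and ι > 0. For every smooth compactly supported vector field v = (v₁,v₂) ∈ C_c^∞(ℝ², ℝ²), the strain gradient elastic energy a(v,v) := ∫_{ℝ²} [ λ (div v)² + 2μ |ε(v)|² ] dx + ι² ∫_{ℝ²} [ λ |∇(div v)|² + 2μ |∇ε(v)|² ] dx satisfies a(v,v) ≥ (2 − √2) μ ( ∫_{ℝ²} |∇v|² dx + ι² ∫_{ℝ²} |∇²v|² dx ). -/

import Mathlib

open MeasureTheory

/-- First partial derivative `∂₁ f` of `f : ℝ² → ℝ`. -/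
noncomputable def pd1 (f : ℝ × ℝ → ℝ) : ℝ × ℝ → ℝ := fun x => fderiv ℝ f x (1, 0)

/-- Second partial derivative `∂₂ f` of `f : ℝ² → ℝ`. -/
noncomputable def pd2 (f : ℝ × ℝ → ℝ) : ℝ × ℝ → ℝ := fun x => fderiv ℝ f x (0, 1)

/-- Divergence `div v = ∂₁v₁ + ∂₂v₂`. -/
noncomputable def divv (v1 v2 : ℝ × ℝ → ℝ) : ℝ × ℝ → ℝ := fun x => pd1 v1 x + pd2 v2 x

/-- Squared Frobenius norm of the symmetric gradient (linearized strain):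
`|ε(v)|² = |∂₁v₁|² + |∂₂v₂|² + (1/2)|∂₂v₁ + ∂₁v₂|²`. -/
noncomputable def epsSq (v1 v2 : ℝ × ℝ → ℝ) (x : ℝ × ℝ) : ℝ :=
  (pd1 v1 x) ^ 2 + (pd2 v2 x) ^ 2 + (1 / 2) * (pd2 v1 x + pd1 v2 x) ^ 2

/-- Squared gradient norm `|∇v|² = Σ_{i,j} |∂_j v_i|²`. -/
noncomputable def gradSq (v1 v2 : ℝ × ℝ → ℝ) (x : ℝ × ℝ) : ℝ :=
  (pd1 v1 x) ^ 2 + (pd2 v1 x) ^ 2 + (pd1 v2 x) ^ 2 + (pd2 v2 x) ^ 2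

/-- Squared Frobenius norm of the strain gradient `|∇ε(v)|²`. -/
noncomputable def gradEpsSq (v1 v2 : ℝ × ℝ → ℝ) (x : ℝ × ℝ) : ℝ :=
  (pd1 (pd1 v1) x) ^ 2 + (pd1 (pd2 v1) x) ^ 2 + (pd1 (pd2 v2) x) ^ 2 + (pd2 (pd2 v2) x) ^ 2
    + (1 / 2) * (pd1 (pd2 v1) x + pd1 (pd1 v2) x) ^ 2
    + (1 / 2) * (pd1 (pd2 v2) x + pd2 (pd2 v1) x) ^ 2

/-- Squared Hessian norm `|∇²v|²`, each distinct second derivative counted once. -/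
noncomputable def hessSq (v1 v2 : ℝ × ℝ → ℝ) (x : ℝ × ℝ) : ℝ :=
  (pd1 (pd1 v1) x) ^ 2 + (pd1 (pd2 v1) x) ^ 2 + (pd2 (pd2 v1) x) ^ 2
    + (pd1 (pd1 v2) x) ^ 2 + (pd1 (pd2 v2) x) ^ 2 + (pd2 (pd2 v2) x) ^ 2

/-- `|∇(div v)|² = |∂₁(div v)|² + |∂₂(div v)|²`. -/
noncomputable def gradDivSq (v1 v2 : ℝ × ℝ → ℝ) (x : ℝ × ℝ) : ℝ :=
  (pd1 (divv v1 v2) x) ^ 2 + (pd2 (divv v1 v2) x) ^ 2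

lemma contDiff_pd1 {f : ℝ × ℝ → ℝ} (hf : ContDiff ℝ (⊤ : ℕ∞) f) :
    ContDiff ℝ (⊤ : ℕ∞) (pd1 f) :=
  (ContinuousLinearMap.apply ℝ ℝ ((1:ℝ), (0:ℝ))).contDiff.comp (hf.fderiv_right (by exact_mod_cast le_top))

lemma contDiff_pd2 {f : ℝ × ℝ → ℝ} (hf : ContDiff ℝ (⊤ : ℕ∞) f) :
    ContDiff ℝ (⊤ : ℕ∞) (pd2 f) :=
  (ContinuousLinearMap.apply ℝ ℝ ((0:ℝ), (1:ℝ))).contDiff.comp (hf.fderiv_right (by exact_mod_cast le_top))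

lemma hcs_pd1 {f : ℝ × ℝ → ℝ} (hf : HasCompactSupport f) : HasCompactSupport (pd1 f) :=
  (hf.fderiv ℝ).comp_left (g := fun L : (ℝ × ℝ) →L[ℝ] ℝ => L (1, 0)) rfl

lemma hcs_pd2 {f : ℝ × ℝ → ℝ} (hf : HasCompactSupport f) : HasCompactSupport (pd2 f) :=
  (hf.fderiv ℝ).comp_left (g := fun L : (ℝ × ℝ) →L[ℝ] ℝ => L (0, 1)) rfl

/-- Symmetry of second partial derivatives for smooth functions. -/
lemma pd_symm {f : ℝ × ℝ → ℝ} (hf : ContDiff ℝ (⊤ : ℕ∞) f) (x : ℝ × ℝ) :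
    pd2 (pd1 f) x = pd1 (pd2 f) x := by
  have hd : Differentiable ℝ (fderiv ℝ f) :=
    (hf.fderiv_right (m := (⊤ : ℕ∞)) (by exact_mod_cast le_top)).differentiable (by simp)
  have key : ∀ v w : ℝ × ℝ,
      fderiv ℝ (fun y => fderiv ℝ f y v) x w = fderiv ℝ (fderiv ℝ f) x w v := by
    intro v w
    have h1 : HasFDerivAt (fun y => fderiv ℝ f y v)
        ((ContinuousLinearMap.apply ℝ ℝ v).comp (fderiv ℝ (fderiv ℝ f) x)) x :=
      (ContinuousLinearMap.apply ℝ ℝ v).hasFDerivAt.comp x (hd x).hasFDerivAt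
    rw [h1.fderiv]; rfl
  have hsymm : fderiv ℝ (fderiv ℝ f) x (0, 1) (1, 0) = fderiv ℝ (fderiv ℝ f) x (1, 0) (0, 1) :=
    (hf.contDiffAt.isSymmSndFDerivAt (by rw [minSmoothness_of_isRCLikeNormedField]; exact WithTop.coe_le_coe.mpr le_top)) _ _
  show fderiv ℝ (fun y => fderiv ℝ f y (1, 0)) x (0, 1)
      = fderiv ℝ (fun y => fderiv ℝ f y (0, 1)) x (1, 0)
  rw [key, key, hsymm]

set_option maxHeartbeats 1000000 in
/-- Coercivity of the strain gradient elastic energy: for `λ ≥ 0`, `μ > 0`, `ι > 0` and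
every `v = (v₁,v₂) ∈ C_c^∞(ℝ², ℝ²)`,
`a(v,v) = ∫ (λ (div v)² + 2μ |ε(v)|²) + ι² ∫ (λ |∇(div v)|² + 2μ |∇ε(v)|²)
  ≥ (2 − √2) μ (∫ |∇v|² + ι² ∫ |∇²v|²)`. -/
theorem coercivity_strain_gradient_energy (lam mu iota : ℝ)
    (hlam : 0 ≤ lam) (hmu : 0 < mu) (hiota : 0 < iota)
    (v1 v2 : ℝ × ℝ → ℝ)
    (h1 : ContDiff ℝ (⊤ : ℕ∞) v1) (h2 : ContDiff ℝ (⊤ : ℕ∞) v2)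
    (hc1 : HasCompactSupport v1) (hc2 : HasCompactSupport v2) :
    (∫ x : ℝ × ℝ, (lam * (divv v1 v2 x) ^ 2 + 2 * mu * epsSq v1 v2 x))
      + iota ^ 2 * ∫ x : ℝ × ℝ, (lam * gradDivSq v1 v2 x + 2 * mu * gradEpsSq v1 v2 x) ≥
      (2 - Real.sqrt 2) * mu *
        ((∫ x : ℝ × ℝ, gradSq v1 v2 x) + iota ^ 2 * ∫ x : ℝ × ℝ, hessSq v1 v2 x) := by
  -- notation for first and second partial derivatives
  set s : ℝ := Real.sqrt 2 with hs
  have hs2 : s ^ 2 = 2 := Real.sq_sqrt (by norm_num)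
  have hs0 : 0 ≤ s := Real.sqrt_nonneg 2
  have hs1 : 1 ≤ s := by nlinarith
  -- continuity and compact support of all derivatives involved
  have C1 : Continuous v1 := h1.continuous
  have C2 : Continuous v2 := h2.continuous
  have cd11 := contDiff_pd1 h1; have cd21 := contDiff_pd2 h1
  have cd12 := contDiff_pd1 h2; have cd22 := contDiff_pd2 h2
  -- integrability helper: product of two continuous functions, first has compact support
  have intg : ∀ f g : ℝ × ℝ → ℝ, Continuous f → Continuous g → HasCompactSupport f →
      Integrable (fun x => f x * g x) (volume : Measure (ℝ × ℝ)) := by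
    intro f g hf hg hcf
    exact (hf.mul hg).integrable_of_hasCompactSupport (hcf.mul_right)
  -- integrability of all quadratic expressions in first derivatives
  have int2 : ∀ f g : ℝ × ℝ → ℝ, ContDiff ℝ (⊤ : ℕ∞) f → ContDiff ℝ (⊤ : ℕ∞) g →
      HasCompactSupport f → Integrable (fun x => f x * g x) (volume : Measure (ℝ × ℝ)) :=
    fun f g hf hg hcf => intg f g hf.continuous hg.continuous hcf
  -- The integration by parts identity: ∫ ∂₂v₁ ∂₁v₂ = ∫ ∂₁v₁ ∂₂v₂
  have ibp : ∫ x : ℝ × ℝ, pd2 v1 x * pd1 v2 x = ∫ x : ℝ × ℝ, pd1 v1 x * pd2 v2 x := by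
    have e1 : ∫ x : ℝ × ℝ, pd1 v2 x * pd2 v1 x
        = - ∫ x : ℝ × ℝ, pd2 (pd1 v2) x * v1 x := by
      apply integral_mul_fderiv_eq_neg_fderiv_mul_of_integrable
      · exact intg _ _ (contDiff_pd2 cd12).continuous C1 (hcs_pd2 (hcs_pd1 hc2))
      · exact intg _ _ cd12.continuous (contDiff_pd2 h1).continuous (hcs_pd1 hc2)
      · exact intg _ _ cd12.continuous C1 (hcs_pd1 hc2)
      · exact fun x _ => cd12.differentiable (by simp) x
      · exact fun x _ => h1.differentiable (by simp) x
    have e2 : ∫ x : ℝ × ℝ, pd2 v2 x * pd1 v1 x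
        = - ∫ x : ℝ × ℝ, pd1 (pd2 v2) x * v1 x := by
      apply integral_mul_fderiv_eq_neg_fderiv_mul_of_integrable
      · exact intg _ _ (contDiff_pd1 cd22).continuous C1 (hcs_pd1 (hcs_pd2 hc2))
      · exact intg _ _ cd22.continuous (contDiff_pd1 h1).continuous (hcs_pd2 hc2)
      · exact intg _ _ cd22.continuous C1 (hcs_pd2 hc2)
      · exact fun x _ => cd22.differentiable (by simp) x
      · exact fun x _ => h1.differentiable (by simp) x
    have esym : ∀ x : ℝ × ℝ, pd2 (pd1 v2) x = pd1 (pd2 v2) x := pd_symm h2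
    calc ∫ x : ℝ × ℝ, pd2 v1 x * pd1 v2 x
        = ∫ x : ℝ × ℝ, pd1 v2 x * pd2 v1 x := by congr 1; ext x; ring
      _ = - ∫ x : ℝ × ℝ, pd2 (pd1 v2) x * v1 x := e1
      _ = - ∫ x : ℝ × ℝ, pd1 (pd2 v2) x * v1 x := by
            congr 1; exact integral_congr_ae (Filter.Eventually.of_forall
              (fun x => by show pd2 (pd1 v2) x * v1 x = pd1 (pd2 v2) x * v1 x; rw [esym x]))
      _ = ∫ x : ℝ × ℝ, pd2 v2 x * pd1 v1 x := e2.symm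
      _ = ∫ x : ℝ × ℝ, pd1 v1 x * pd2 v2 x := by congr 1; ext x; ring
  -- integrability of the main integrands
  have isq : ∀ f : ℝ × ℝ → ℝ, ContDiff ℝ (⊤ : ℕ∞) f → HasCompactSupport f →
      Integrable (fun x => f x ^ 2) (volume : Measure (ℝ × ℝ)) := by
    intro f hf hcf
    simpa [sq] using int2 f f hf hf hcf
  have igrad : Integrable (fun x => gradSq v1 v2 x) (volume : Measure (ℝ × ℝ)) := by
    have := ((isq _ cd11 (hcs_pd1 hc1)).add (isq _ cd21 (hcs_pd2 hc1))).add
      ((isq _ cd12 (hcs_pd1 hc2)).add (isq _ cd22 (hcs_pd2 hc2)))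
    simpa [gradSq, add_assoc, Pi.add_def] using this
  have idiv : Integrable (fun x => (divv v1 v2 x) ^ 2) (volume : Measure (ℝ × ℝ)) := by
    have h : Continuous (divv v1 v2) := cd11.continuous.add cd22.continuous
    have hc : HasCompactSupport (divv v1 v2) := (hcs_pd1 hc1).add (hcs_pd2 hc2)
    simpa [sq] using intg _ _ h h hc
  have icross : Integrable (fun x => pd2 v1 x * pd1 v2 x - pd1 v1 x * pd2 v2 x)
      (volume : Measure (ℝ × ℝ)) :=
    (int2 _ _ cd21 cd12 (hcs_pd2 hc1)).sub (int2 _ _ cd11 cd22 (hcs_pd1 hc1))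
  have ieps : Integrable (fun x => epsSq v1 v2 x) (volume : Measure (ℝ × ℝ)) := by
    have key : ∀ x, epsSq v1 v2 x = (1/2) * gradSq v1 v2 x + (1/2) * (divv v1 v2 x) ^ 2
        + (pd2 v1 x * pd1 v2 x - pd1 v1 x * pd2 v2 x) := by
      intro x; simp only [epsSq, gradSq, divv]; ring
    simp only [key]
    exact ((igrad.const_mul _).add (idiv.const_mul _)).add icross
  -- second order integrability
  have ihess : Integrable (fun x => hessSq v1 v2 x) (volume : Measure (ℝ × ℝ)) := by
    have := ((isq _ (contDiff_pd1 cd11) (hcs_pd1 (hcs_pd1 hc1))).add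
        (isq _ (contDiff_pd1 cd21) (hcs_pd1 (hcs_pd2 hc1)))).add
      (((isq _ (contDiff_pd2 cd21) (hcs_pd2 (hcs_pd2 hc1))).add
        (isq _ (contDiff_pd1 cd12) (hcs_pd1 (hcs_pd1 hc2)))).add
      ((isq _ (contDiff_pd1 cd22) (hcs_pd1 (hcs_pd2 hc2))).add
        (isq _ (contDiff_pd2 cd22) (hcs_pd2 (hcs_pd2 hc2)))))
    simpa [hessSq, add_assoc, Pi.add_def] using this
  have igradeps : Integrable (fun x => gradEpsSq v1 v2 x) (volume : Measure (ℝ × ℝ)) := by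
    have i1 := isq _ (contDiff_pd1 cd11) (hcs_pd1 (hcs_pd1 hc1))
    have i2 := isq _ (contDiff_pd1 cd21) (hcs_pd1 (hcs_pd2 hc1))
    have i3 := isq _ (contDiff_pd1 cd22) (hcs_pd1 (hcs_pd2 hc2))
    have i4 := isq _ (contDiff_pd2 cd22) (hcs_pd2 (hcs_pd2 hc2))
    have i5 : Integrable (fun x => (1/2 : ℝ) * (pd1 (pd2 v1) x + pd1 (pd1 v2) x) ^ 2)
        (volume : Measure (ℝ × ℝ)) := by
      have h : Continuous (fun x => pd1 (pd2 v1) x + pd1 (pd1 v2) x) :=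
        (contDiff_pd1 cd21).continuous.add (contDiff_pd1 cd12).continuous
      have hc : HasCompactSupport (fun x => pd1 (pd2 v1) x + pd1 (pd1 v2) x) :=
        (hcs_pd1 (hcs_pd2 hc1)).add (hcs_pd1 (hcs_pd1 hc2))
      have : Integrable (fun x => (pd1 (pd2 v1) x + pd1 (pd1 v2) x) ^ 2)
          (volume : Measure (ℝ × ℝ)) := by
        simpa [sq, Pi.mul_def] using (h.mul h).integrable_of_hasCompactSupport hc.mul_right
      exact this.const_mul _
    have i6 : Integrable (fun x => (1/2 : ℝ) * (pd1 (pd2 v2) x + pd2 (pd2 v1) x) ^ 2)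
        (volume : Measure (ℝ × ℝ)) := by
      have h : Continuous (fun x => pd1 (pd2 v2) x + pd2 (pd2 v1) x) :=
        (contDiff_pd1 cd22).continuous.add (contDiff_pd2 cd21).continuous
      have hc : HasCompactSupport (fun x => pd1 (pd2 v2) x + pd2 (pd2 v1) x) :=
        (hcs_pd1 (hcs_pd2 hc2)).add (hcs_pd2 (hcs_pd2 hc1))
      have : Integrable (fun x => (pd1 (pd2 v2) x + pd2 (pd2 v1) x) ^ 2)
          (volume : Measure (ℝ × ℝ)) := by
        simpa [sq, Pi.mul_def] using (h.mul h).integrable_of_hasCompactSupport hc.mul_right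
      exact this.const_mul _
    have := ((((i1.add i2).add i3).add i4).add i5).add i6
    simpa [gradEpsSq, add_assoc, Pi.add_def] using this
  have igraddiv : Integrable (fun x => gradDivSq v1 v2 x) (volume : Measure (ℝ × ℝ)) := by
    have hdc : ContDiff ℝ (⊤ : ℕ∞) (divv v1 v2) := cd11.add cd22
    have hdcs : HasCompactSupport (divv v1 v2) := (hcs_pd1 hc1).add (hcs_pd2 hc2)
    have := (isq _ (contDiff_pd1 hdc) (hcs_pd1 hdcs)).add
      (isq _ (contDiff_pd2 hdc) (hcs_pd2 hdcs))
    simpa [gradDivSq, Pi.add_def] using this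
  -- nonnegativity of the base integrals
  have hG : 0 ≤ ∫ x : ℝ × ℝ, gradSq v1 v2 x :=
    integral_nonneg (fun x => by simp only [gradSq]; positivity)
  have hH : 0 ≤ ∫ x : ℝ × ℝ, hessSq v1 v2 x :=
    integral_nonneg (fun x => by simp only [hessSq]; positivity)
  have hD : 0 ≤ ∫ x : ℝ × ℝ, (divv v1 v2 x) ^ 2 := integral_nonneg (fun x => by positivity)
  -- Step 1: first-order term
  have step1 : ∫ x : ℝ × ℝ, (lam * (divv v1 v2 x) ^ 2 + 2 * mu * epsSq v1 v2 x)
      ≥ mu * ∫ x : ℝ × ℝ, gradSq v1 v2 x := by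
    have split : ∫ x : ℝ × ℝ, (lam * (divv v1 v2 x) ^ 2 + 2 * mu * epsSq v1 v2 x)
        = lam * (∫ x : ℝ × ℝ, (divv v1 v2 x) ^ 2) + 2 * mu * ∫ x : ℝ × ℝ, epsSq v1 v2 x := by
      rw [integral_add (idiv.const_mul _) (ieps.const_mul _), integral_const_mul,
        integral_const_mul]
    have epsid : ∫ x : ℝ × ℝ, epsSq v1 v2 x
        = (1/2) * (∫ x : ℝ × ℝ, gradSq v1 v2 x) + (1/2) * (∫ x : ℝ × ℝ, (divv v1 v2 x) ^ 2) := by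
      have key : (fun x => epsSq v1 v2 x)
          = fun x => ((1/2) * gradSq v1 v2 x + (1/2) * (divv v1 v2 x) ^ 2)
            + (pd2 v1 x * pd1 v2 x - pd1 v1 x * pd2 v2 x) := by
        funext x; simp only [epsSq, gradSq, divv]; ring
      have ia : Integrable (fun x => (1/2 : ℝ) * gradSq v1 v2 x
          + (1/2 : ℝ) * (divv v1 v2 x) ^ 2) (volume : Measure (ℝ × ℝ)) :=
        (igrad.const_mul _).add (idiv.const_mul _)
      rw [key, integral_add ia icross,
        integral_add (igrad.const_mul _) (idiv.const_mul _), integral_const_mul,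
        integral_const_mul, integral_sub (int2 _ _ cd21 cd12 (hcs_pd2 hc1))
          (int2 _ _ cd11 cd22 (hcs_pd1 hc1))]
      rw [ibp]; ring
    rw [split, epsid]
    nlinarith [mul_nonneg hlam hD, mul_nonneg hmu.le hD]
  have step2 : iota ^ 2 * ∫ x : ℝ × ℝ, (lam * gradDivSq v1 v2 x + 2 * mu * gradEpsSq v1 v2 x)
      ≥ (2 - s) * mu * (iota ^ 2 * ∫ x : ℝ × ℝ, hessSq v1 v2 x) := by
    have mono : ∫ x : ℝ × ℝ, (2 - s) * mu * hessSq v1 v2 x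
        ≤ ∫ x : ℝ × ℝ, (lam * gradDivSq v1 v2 x + 2 * mu * gradEpsSq v1 v2 x) := by
      apply integral_mono (ihess.const_mul _)
        ((igraddiv.const_mul _).add (igradeps.const_mul _))
      intro x
      have h0 : 0 ≤ lam * gradDivSq v1 v2 x := by
        apply mul_nonneg hlam; simp only [gradDivSq]; positivity
      have key : (2 - s) * hessSq v1 v2 x ≤ 2 * gradEpsSq v1 v2 x := by
        simp only [hessSq, gradEpsSq]
        nlinarith [sq_nonneg ((1 + s) * (pd1 (pd2 v1) x) + pd1 (pd1 v2) x),
          sq_nonneg ((1 + s) * (pd1 (pd2 v2) x) + pd2 (pd2 v1) x),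
          sq_nonneg (pd1 (pd1 v1) x), sq_nonneg (pd2 (pd2 v2) x), hs2, hs0, hs1]
      have hmul := mul_le_mul_of_nonneg_left key hmu.le
      have e1 : (2 - s) * mu * hessSq v1 v2 x = mu * ((2 - s) * hessSq v1 v2 x) := by ring
      have e2 : mu * (2 * gradEpsSq v1 v2 x) = 2 * mu * gradEpsSq v1 v2 x := by ring
      show (2 - s) * mu * hessSq v1 v2 x
        ≤ lam * gradDivSq v1 v2 x + 2 * mu * gradEpsSq v1 v2 x
      linarith [hmul, h0, e1, e2]
    rw [integral_const_mul] at mono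
    have hi2 : (0:ℝ) ≤ iota ^ 2 := sq_nonneg iota
    calc iota ^ 2 * ∫ x : ℝ × ℝ, (lam * gradDivSq v1 v2 x + 2 * mu * gradEpsSq v1 v2 x)
        ≥ iota ^ 2 * ((2 - s) * mu * ∫ x : ℝ × ℝ, hessSq v1 v2 x) :=
          mul_le_mul_of_nonneg_left mono hi2
      _ = (2 - s) * mu * (iota ^ 2 * ∫ x : ℝ × ℝ, hessSq v1 v2 x) := by ring
  -- combine
  have hcoef : (2 - s) * mu ≤ mu := by nlinarith
  have first : ∫ x : ℝ × ℝ, (lam * (divv v1 v2 x) ^ 2 + 2 * mu * epsSq v1 v2 x)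
      ≥ (2 - s) * mu * ∫ x : ℝ × ℝ, gradSq v1 v2 x := by
    calc ∫ x : ℝ × ℝ, (lam * (divv v1 v2 x) ^ 2 + 2 * mu * epsSq v1 v2 x)
        ≥ mu * ∫ x : ℝ × ℝ, gradSq v1 v2 x := step1
      _ ≥ (2 - s) * mu * ∫ x : ℝ × ℝ, gradSq v1 v2 x :=
          mul_le_mul_of_nonneg_right hcoef hG
  rw [ge_iff_le, mul_add]
  exact add_le_add first step2
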